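/- Let F be a non-archimedean local field of residue cardinality ℓ, and let m: F × F → F be the multiplication map. Let μ be the Haar probability measure on O_F × O_F. Then the pushforward m_*(μ) is absolutely continuous with respect to the Haar measure μ_F on F normalized so that μ_F(O_F)=1, with density r(z) = ((ℓ-1)/ℓ)·(val(z)+1) for z ∈ O_F \ {0}, and the pushforward is supported on O_F. -/

import Mathlib

open MeasureTheory

namespace MulPush

set_option linter.unusedSectionVars false

lemma aux_summable (x : ℝ) (h0 : 0 ≤ x) (h1 : x < 1) (m : ℕ) :
    Summable (fun i : ℕ => ((1-x) * ((m:ℝ)+i+1)) * (x^(m+i) * (1-x))) := by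
  have hs1 : Summable (fun i : ℕ => (i:ℝ) * x^i) := by
    have := summable_pow_mul_geometric_of_norm_lt_one (R := ℝ) 1
      (by rwa [Real.norm_eq_abs, abs_of_nonneg h0])
    simpa using this
  have hs2 : Summable (fun i : ℕ => x^i) := summable_geometric_of_lt_one h0 h1
  have e : ∀ i : ℕ, ((1-x) * ((m:ℝ)+i+1)) * (x^(m+i) * (1-x))
      = ((1-x)^2 * x^m) * ((i:ℝ) * x^i) + ((1-x)^2 * x^m * ((m:ℝ)+1)) * x^i := by
    intro i; rw [pow_add]; ring
  rw [funext e]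
  exact ((hs1.mul_left _).add (hs2.mul_left _))

lemma aux_tsum (x : ℝ) (h0 : 0 ≤ x) (h1 : x < 1) (m : ℕ) :
    ∑' i : ℕ, ((1-x) * ((m:ℝ)+i+1)) * (x^(m+i) * (1-x)) = x^m * (1 + m*(1-x)) := by
  have hs1 : Summable (fun i : ℕ => (i:ℝ) * x^i) := by
    have := summable_pow_mul_geometric_of_norm_lt_one (R := ℝ) 1
      (by rwa [Real.norm_eq_abs, abs_of_nonneg h0])
    simpa using this
  have hs2 : Summable (fun i : ℕ => x^i) := summable_geometric_of_lt_one h0 h1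
  have hx : ‖x‖ < 1 := by rwa [Real.norm_eq_abs, abs_of_nonneg h0]
  have e : ∀ i : ℕ, ((1-x) * ((m:ℝ)+i+1)) * (x^(m+i) * (1-x))
      = ((1-x)^2 * x^m) * ((i:ℝ) * x^i) + ((1-x)^2 * x^m * ((m:ℝ)+1)) * x^i := by
    intro i; rw [pow_add]; ring
  rw [tsum_congr e, Summable.tsum_add (hs1.mul_left _) (hs2.mul_left _), tsum_mul_left, tsum_mul_left,
    tsum_coe_mul_geometric_of_norm_lt_one hx, tsum_geometric_of_lt_one h0 h1]
  have hne : (1 - x) ≠ 0 := by linarith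
  field_simp
  ring

section Real
variable {ℓ : ℕ} (hℓ : 2 ≤ ℓ)
include hℓ

lemma hl1 : (1:ℝ) < ℓ := by exact_mod_cast hℓ.trans_lt' one_lt_two
lemma hl0 : (0:ℝ) < ℓ := lt_trans one_pos (hl1 hℓ)
lemma hlne : (ℓ:ℝ) ≠ 0 := ne_of_gt (hl0 hℓ)
lemma hx0 : (0:ℝ) ≤ (ℓ:ℝ)⁻¹ := inv_nonneg.2 (hl0 hℓ).le
lemma hx1 : (ℓ:ℝ)⁻¹ < 1 := inv_lt_one_of_one_lt₀ (hl1 hℓ)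
lemma hxc : (0:ℝ) ≤ 1 - (ℓ:ℝ)⁻¹ := by linarith [hx1 hℓ]

lemma zpow_inj' {s t : ℤ} (h : (ℓ:ℝ)^s = (ℓ:ℝ)^t) : s = t := by
  have h1 := hl1 hℓ
  have hst := (zpow_le_zpow_iff_right₀ h1).1 h.le
  have hts := (zpow_le_zpow_iff_right₀ h1).1 h.ge
  omega

lemma xpow (j : ℕ) : (ℓ:ℝ)^(-(j:ℤ)) = ((ℓ:ℝ)⁻¹)^j := by
  rw [zpow_neg, zpow_natCast, inv_pow]

lemma epow (k : ℤ) : (ℓ:ENNReal)^k = ENNReal.ofReal ((ℓ:ℝ)^k) := by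
  have h0 := (hl0 hℓ)
  cases k with
  | ofNat n =>
    rw [Int.ofNat_eq_coe, zpow_natCast, zpow_natCast, ENNReal.ofReal_pow h0.le,
      ENNReal.ofReal_natCast]
  | negSucc n =>
    rw [zpow_negSucc, zpow_negSucc, ENNReal.ofReal_inv_of_pos (pow_pos h0 _),
      ENNReal.ofReal_pow h0.le, ENNReal.ofReal_natCast]

lemma mylogb (t : ℤ) : Real.logb ℓ ((ℓ:ℝ)^t) = t := by
  have h1 := hl1 hℓ
  rw [Real.logb, Real.log_zpow, mul_div_assoc, div_self (ne_of_gt (Real.log_pos h1)), mul_one]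

lemma density_const : ((ℓ:ℝ) - 1)/ℓ = 1 - (ℓ:ℝ)⁻¹ := by
  field_simp

end Real

section Norm
variable {F : Type*} [NormedField F] [IsUltrametricDist F]

lemma norm_eq_of_sub_lt {z a : F} (h : ‖z - a‖ < ‖a‖) : ‖z‖ = ‖a‖ := by
  have h2 := IsUltrametricDist.norm_add_eq_max_of_norm_ne_norm (x := z - a) (y := a) (ne_of_lt h)
  rw [sub_add_cancel] at h2
  rw [h2, max_eq_right h.le]

lemma ball_set_eq (a : F) (c : ℝ) :
    {x : F | ‖x - a‖ ≤ c} = Metric.closedBall a c := by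
  ext x; simp [Metric.mem_closedBall, dist_eq_norm]

lemma ball0_set_eq (c : ℝ) :
    {x : F | ‖x‖ ≤ c} = Metric.closedBall 0 c := by
  ext x; simp [Metric.mem_closedBall, dist_eq_norm]

lemma piSystem_balls (ℓ : ℕ) (hℓ : 2 ≤ ℓ) :
    IsPiSystem {s : Set F | ∃ (a : F) (k : ℤ), s = Metric.closedBall a ((ℓ:ℝ)^k)} := by
  rintro s ⟨a, k, rfl⟩ t ⟨b, j, rfl⟩ hne
  obtain ⟨c, hcs, hct⟩ := hne
  rw [IsUltrametricDist.closedBall_eq_of_mem hcs, IsUltrametricDist.closedBall_eq_of_mem hct]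
  refine ⟨c, min k j, ?_⟩
  have h1 : (1:ℝ) < ℓ := hl1 hℓ
  have : Metric.closedBall c ((ℓ:ℝ)^k) ∩ Metric.closedBall c ((ℓ:ℝ)^j)
      = Metric.closedBall c (min ((ℓ:ℝ)^k) ((ℓ:ℝ)^j)) := by
    ext x; simp [le_min_iff]
  rw [this]
  rcases le_total k j with h | h
  · rw [min_eq_left ((zpow_le_zpow_iff_right₀ h1).2 h), min_eq_left h]
  · rw [min_eq_right ((zpow_le_zpow_iff_right₀ h1).2 h), min_eq_right h]

lemma generate_balls (ℓ : ℕ) (hℓ : 2 ≤ ℓ) [MeasurableSpace F] [BorelSpace F]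
    [SecondCountableTopology F] :
    ‹MeasurableSpace F› = MeasurableSpace.generateFrom
      {s : Set F | ∃ (a : F) (k : ℤ), s = Metric.closedBall a ((ℓ:ℝ)^k)} := by
  have h1 : (1:ℝ) < ℓ := hl1 hℓ
  have h0 : (0:ℝ) < ℓ := hl0 hℓ
  have hb : TopologicalSpace.IsTopologicalBasis
      {s : Set F | ∃ (a : F) (k : ℤ), s = Metric.closedBall a ((ℓ:ℝ)^k)} := by
    apply TopologicalSpace.isTopologicalBasis_of_isOpen_of_nhds
    · rintro s ⟨a, k, rfl⟩
      exact IsUltrametricDist.isOpen_closedBall a (ne_of_gt (zpow_pos h0 k))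
    · intro x u hxu hu
      obtain ⟨ε, hε, hball⟩ := Metric.isOpen_iff.1 hu x hxu
      obtain ⟨n, hn⟩ := exists_pow_lt_of_lt_one (y := (ℓ:ℝ)⁻¹) hε (inv_lt_one_of_one_lt₀ h1)
      refine ⟨Metric.closedBall x ((ℓ:ℝ)^(-(n:ℤ))), ⟨x, -(n:ℤ), rfl⟩, ?_, ?_⟩
      · exact Metric.mem_closedBall_self (le_of_lt (zpow_pos h0 _))
      · refine subset_trans (fun y hy => ?_) hball
        rw [Metric.mem_closedBall] at hy
        rw [Metric.mem_ball]
        calc dist y x ≤ (ℓ:ℝ)^(-(n:ℤ)) := hy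
          _ = ((ℓ:ℝ)⁻¹)^n := by rw [inv_pow, ← zpow_natCast, ← zpow_neg]
          _ < ε := hn
  rw [hb.borel_eq_generateFrom.symm, BorelSpace.measurable_eq (α := F)]

variable [MeasurableSpace F] [BorelSpace F]

lemma meas_ball (a : F) (c : ℝ) : MeasurableSet {x : F | ‖x - a‖ ≤ c} := by
  rw [ball_set_eq]; exact Metric.isClosed_closedBall.measurableSet

lemma meas_ball0 (c : ℝ) : MeasurableSet {x : F | ‖x‖ ≤ c} := by
  rw [ball0_set_eq]; exact Metric.isClosed_closedBall.measurableSet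

lemma meas_sphere (c : ℝ) : MeasurableSet {x : F | ‖x‖ = c} :=
  measurable_norm (measurableSet_singleton c)

end Norm

section Meas
variable {ℓ : ℕ} (hℓ : 2 ≤ ℓ)
variable {F : Type*} [NormedField F] [IsUltrametricDist F] [MeasurableSpace F] [BorelSpace F]
variable {μ ν : Measure F} [IsProbabilityMeasure μ]
variable (hdisc : ∀ x : F, x ≠ 0 → ∃ k : ℤ, ‖x‖ = (ℓ : ℝ) ^ k)
variable (hμ : ∀ (m : ℕ) (a : F), ‖a‖ ≤ 1 →
      μ {x : F | ‖x - a‖ ≤ (ℓ : ℝ) ^ (-(m : ℤ))} = (ℓ : ENNReal) ^ (-(m : ℤ)))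
variable (hν : ∀ (k : ℤ) (a : F), ν {x : F | ‖x - a‖ ≤ (ℓ : ℝ) ^ k} = (ℓ : ENNReal) ^ k)

include hμ in
lemma mu_ball {k : ℤ} (hk : k ≤ 0) {a : F} (ha : ‖a‖ ≤ 1) :
    μ {x : F | ‖x - a‖ ≤ (ℓ:ℝ)^k} = (ℓ:ENNReal)^k := by
  have h := hμ (-k).toNat a ha
  rw [show (-(((-k).toNat : ℕ) : ℤ)) = k by omega] at h
  exact h

include hμ in
lemma mu_ball0 {k : ℤ} (hk : k ≤ 0) :
    μ {x : F | ‖x‖ ≤ (ℓ:ℝ)^k} = (ℓ:ENNReal)^k := by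
  have h := mu_ball hμ hk (a := (0:F)) (by simp)
  simpa using h

include hμ in
lemma mu_OF : μ {x : F | ‖x‖ ≤ 1} = 1 := by
  have h := mu_ball0 hμ (k := 0) le_rfl
  simpa using h

include hμ in
lemma mu_compl : μ {x : F | ‖x‖ ≤ 1}ᶜ = 0 := by
  rw [measure_compl (meas_ball0 1) (measure_ne_top μ _), mu_OF hμ, measure_univ, tsub_self]

include hμ in
lemma mu_null_of_subset {s : Set F} (hs : ∀ x ∈ s, ¬ ‖x‖ ≤ 1) : μ s = 0 :=
  measure_mono_null (fun x hx => hs x hx) (mu_compl hμ)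

include hμ in
lemma ae_OF : ∀ᵐ x ∂μ, ‖x‖ ≤ 1 := by
  rw [ae_iff]
  exact mu_compl hμ

include hℓ hdisc in
lemma sphere_eq (k : ℤ) : {x : F | ‖x‖ = (ℓ:ℝ)^k}
    = {x : F | ‖x‖ ≤ (ℓ:ℝ)^k} \ {x : F | ‖x‖ ≤ (ℓ:ℝ)^(k-1)} := by
  have h1 := hl1 hℓ
  ext z
  simp only [Set.mem_setOf_eq, Set.mem_diff, not_le]
  constructor
  · intro h
    refine ⟨le_of_eq h, ?_⟩
    rw [h]
    exact (zpow_lt_zpow_iff_right₀ h1).2 (by omega)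
  · rintro ⟨h2, h3⟩
    have hz : z ≠ 0 := by
      rintro rfl
      rw [norm_zero] at h3
      exact absurd h3 (not_lt.2 (zpow_pos (hl0 hℓ) _).le)
    obtain ⟨t, ht⟩ := hdisc z hz
    rw [ht] at h2 h3 ⊢
    have htk : t ≤ k := (zpow_le_zpow_iff_right₀ h1).1 h2
    have hkt : k - 1 < t := (zpow_lt_zpow_iff_right₀ h1).1 h3
    congr 1
    omega

include hℓ hdisc hμ in
lemma mu_sphere (j : ℕ) : μ {x : F | ‖x‖ = (ℓ:ℝ)^(-(j:ℤ))}
    = ENNReal.ofReal (((ℓ:ℝ)⁻¹)^j * (1 - (ℓ:ℝ)⁻¹)) := by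
  have hd := measure_diff (μ := μ) (s₁ := {x : F | ‖x‖ ≤ (ℓ:ℝ)^(-(j:ℤ))})
      (s₂ := {x : F | ‖x‖ ≤ (ℓ:ℝ)^(-(j:ℤ)-1)})
      (fun x hx => le_trans hx ((zpow_le_zpow_iff_right₀ (hl1 hℓ)).2 (by omega)))
      (meas_ball0 _).nullMeasurableSet
      (by rw [mu_ball0 hμ (by omega), epow hℓ]; exact ENNReal.ofReal_ne_top)
  rw [sphere_eq hℓ hdisc, hd,
    mu_ball0 hμ (by omega : -(j:ℤ) - 1 ≤ 0), mu_ball0 hμ (by omega : -(j:ℤ) ≤ 0),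
    epow hℓ, epow hℓ, ← ENNReal.ofReal_sub _ (zpow_nonneg (hl0 hℓ).le _)]
  congr 1
  have e1 : (ℓ:ℝ)^(-(j:ℤ)) = ((ℓ:ℝ)⁻¹)^j := xpow hℓ j
  have e2 : (ℓ:ℝ)^(-(j:ℤ)-1) = ((ℓ:ℝ)⁻¹)^(j+1) := by
    rw [show (-(j:ℤ)-1) = -((j+1:ℕ):ℤ) by push_cast; ring, xpow hℓ]
  rw [e1, e2, pow_succ]
  ring

include hℓ hdisc hν in
lemma nu_sphere (j : ℕ) : ν {x : F | ‖x‖ = (ℓ:ℝ)^(-(j:ℤ))}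
    = ENNReal.ofReal (((ℓ:ℝ)⁻¹)^j * (1 - (ℓ:ℝ)⁻¹)) := by
  have hb : ∀ k : ℤ, ν {x : F | ‖x‖ ≤ (ℓ:ℝ)^k} = (ℓ:ENNReal)^k := by
    intro k
    have h := hν k 0
    simpa using h
  have hd := measure_diff (μ := ν) (s₁ := {x : F | ‖x‖ ≤ (ℓ:ℝ)^(-(j:ℤ))})
      (s₂ := {x : F | ‖x‖ ≤ (ℓ:ℝ)^(-(j:ℤ)-1)})
      (fun x hx => le_trans hx ((zpow_le_zpow_iff_right₀ (hl1 hℓ)).2 (by omega)))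
      (meas_ball0 _).nullMeasurableSet
      (by rw [hb, epow hℓ]; exact ENNReal.ofReal_ne_top)
  rw [sphere_eq hℓ hdisc, hd, hb, hb, epow hℓ, epow hℓ,
    ← ENNReal.ofReal_sub _ (zpow_nonneg (hl0 hℓ).le _)]
  congr 1
  have e1 : (ℓ:ℝ)^(-(j:ℤ)) = ((ℓ:ℝ)⁻¹)^j := xpow hℓ j
  have e2 : (ℓ:ℝ)^(-(j:ℤ)-1) = ((ℓ:ℝ)⁻¹)^(j+1) := by
    rw [show (-(j:ℤ)-1) = -((j+1:ℕ):ℤ) by push_cast; ring, xpow hℓ]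
  rw [e1, e2, pow_succ]
  ring

end Meas

section LHS
variable {ℓ : ℕ} (hℓ : 2 ≤ ℓ)
variable {F : Type*} [NormedField F] [IsUltrametricDist F] [MeasurableSpace F] [BorelSpace F]
  [SecondCountableTopology F]
variable {μ : Measure F} [IsProbabilityMeasure μ]
variable (hdisc : ∀ x : F, x ≠ 0 → ∃ k : ℤ, ‖x‖ = (ℓ : ℝ) ^ k)
variable (hμ : ∀ (m : ℕ) (a : F), ‖a‖ ≤ 1 →
      μ {x : F | ‖x - a‖ ≤ (ℓ : ℝ) ^ (-(m : ℤ))} = (ℓ : ENNReal) ^ (-(m : ℤ)))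

lemma map_apply_mul {s : Set F} (hs : MeasurableSet s) :
    (μ.prod μ).map (fun p : F × F => p.1 * p.2) s = ∫⁻ w, μ {y : F | w * y ∈ s} ∂μ := by
  rw [Measure.map_apply (show Measurable (fun p : F × F => p.1 * p.2) from (continuous_fst.mul continuous_snd).measurable) hs,
    Measure.prod_apply ((show Measurable (fun p : F × F => p.1 * p.2) from (continuous_fst.mul continuous_snd).measurable) hs)]
  rfl

include hμ in
lemma LHS_one {s : Set F} (hsub : {x : F | ‖x‖ ≤ 1} ⊆ s) :
    ∫⁻ w, μ {y : F | w * y ∈ s} ∂μ = 1 := by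
  have key : ∀ w : F, ‖w‖ ≤ 1 → μ {y : F | w * y ∈ s} = 1 := by
    intro w hw
    refine le_antisymm prob_le_one ?_
    refine le_trans (le_of_eq (mu_OF hμ).symm) (measure_mono ?_)
    intro y hy
    simp only [Set.mem_setOf_eq] at hy ⊢
    refine hsub (show ‖w * y‖ ≤ 1 from ?_)
    rw [norm_mul]
    calc ‖w‖ * ‖y‖ ≤ 1 * 1 := mul_le_mul hw hy (norm_nonneg y) zero_le_one
      _ = 1 := one_mul 1
  rw [lintegral_congr_ae (g := fun _ => (1:ENNReal))
    (by filter_upwards [ae_OF hμ] with w hw using key w hw)]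
  simp

include hμ in
lemma LHS_empty {s : Set F} (hs : ∀ z ∈ s, ¬ ‖z‖ ≤ 1) :
    ∫⁻ w, μ {y : F | w * y ∈ s} ∂μ = 0 := by
  have key : ∀ w : F, ‖w‖ ≤ 1 → μ {y : F | w * y ∈ s} = 0 := by
    intro w hw
    apply mu_null_of_subset hμ
    intro y hy h1
    refine hs _ hy ?_
    rw [norm_mul]
    calc ‖w‖ * ‖y‖ ≤ 1 * 1 := mul_le_mul hw h1 (norm_nonneg y) zero_le_one
      _ = 1 := one_mul 1
  rw [lintegral_congr_ae (g := fun _ => (0:ENNReal))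
    (by filter_upwards [ae_OF hμ] with w hw using key w hw)]
  simp

include hℓ hμ in
lemma mu_ball_far {c : F} {k : ℤ} (hc : 1 < ‖c‖) (hk : (ℓ:ℝ)^k < ‖c‖) :
    μ {y : F | ‖y - c‖ ≤ (ℓ:ℝ)^k} = 0 := by
  apply mu_null_of_subset hμ
  intro y hy
  have h := norm_eq_of_sub_lt (lt_of_le_of_lt hy hk)
  rw [h]
  exact not_le.2 hc

include hℓ hdisc hμ in
lemma LHS_zero (m : ℕ) :
    ∫⁻ w, μ {y : F | ‖w * y‖ ≤ (ℓ:ℝ)^(-(m:ℤ))} ∂μ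
      = ENNReal.ofReal (((ℓ:ℝ)⁻¹)^m * (1 + m * (1 - (ℓ:ℝ)⁻¹))) := by
  have h1 := hl1 hℓ
  have h0 := hl0 hℓ
  have key : ∀ w : F, ‖w‖ ≤ 1 → μ {y : F | ‖w * y‖ ≤ (ℓ:ℝ)^(-(m:ℤ))}
      = Set.indicator {v : F | ‖v‖ ≤ (ℓ:ℝ)^(-(m:ℤ))} (fun _ => (1:ENNReal)) w
        + ∑ j ∈ Finset.range m, Set.indicator {v : F | ‖v‖ = (ℓ:ℝ)^(-(j:ℤ))}
            (fun _ => (ℓ:ENNReal)^((j:ℤ)-(m:ℤ))) w := by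
    intro w hw
    by_cases hsmall : ‖w‖ ≤ (ℓ:ℝ)^(-(m:ℤ))
    · rw [Set.indicator_of_mem (show w ∈ {v : F | ‖v‖ ≤ (ℓ:ℝ)^(-(m:ℤ))} from hsmall),
        Finset.sum_eq_zero, add_zero]
      · refine le_antisymm prob_le_one ?_
        calc (1:ENNReal) = μ {v : F | ‖v‖ ≤ 1} := (mu_OF hμ).symm
          _ ≤ _ := measure_mono (fun y hy => by
            show ‖w*y‖ ≤ _
            rw [norm_mul]
            calc ‖w‖ * ‖y‖ ≤ ‖w‖ * 1 := mul_le_mul_of_nonneg_left hy (norm_nonneg w)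
              _ = ‖w‖ := mul_one _
              _ ≤ _ := hsmall)
      · intro j hj
        apply Set.indicator_of_notMem
        simp only [Set.mem_setOf_eq]
        intro he
        rw [he] at hsmall
        have h2 := (zpow_le_zpow_iff_right₀ h1).1 hsmall
        have h3 := Finset.mem_range.1 hj
        omega
    · have hw0 : w ≠ 0 := by
        rintro rfl
        rw [norm_zero] at hsmall
        exact hsmall (zpow_pos h0 _).le
      obtain ⟨t, ht⟩ := hdisc w hw0
      have ht0 : t ≤ 0 := by
        have h2 : (ℓ:ℝ)^t ≤ (ℓ:ℝ)^(0:ℤ) := by rw [zpow_zero, ← ht]; exact hw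
        exact (zpow_le_zpow_iff_right₀ h1).1 h2
      have htm : -(m:ℤ) < t := by
        by_contra hcon
        push_neg at hcon
        exact hsmall (ht ▸ (zpow_le_zpow_iff_right₀ h1).2 hcon)
      have hfib : {y : F | ‖w * y‖ ≤ (ℓ:ℝ)^(-(m:ℤ))} = {y : F | ‖y‖ ≤ (ℓ:ℝ)^(-(m:ℤ)-t)} := by
        ext y
        simp only [Set.mem_setOf_eq, norm_mul, ht]
        rw [zpow_sub₀ (hlne hℓ), le_div_iff₀' (zpow_pos h0 t)]
      rw [hfib, mu_ball0 hμ (by omega),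
        Set.indicator_of_notMem (show w ∉ {v : F | ‖v‖ ≤ (ℓ:ℝ)^(-(m:ℤ))} from hsmall), zero_add]
      have hj0 : ((-t).toNat : ℤ) = -t := Int.toNat_of_nonneg (by omega)
      rw [Finset.sum_eq_single_of_mem (-t).toNat (Finset.mem_range.2 (by omega))]
      · rw [Set.indicator_of_mem (by simp only [Set.mem_setOf_eq]; rw [ht]; congr 1; omega)]
        congr 1
        omega
      · intro j hjr hne
        apply Set.indicator_of_notMem
        simp only [Set.mem_setOf_eq]
        rw [ht]
        intro he
        have := zpow_inj' hℓ he
        omega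
  rw [lintegral_congr_ae (by filter_upwards [ae_OF hμ] with w hw using key w hw)]
  rw [lintegral_add_left (measurable_const.indicator (meas_ball0 _)),
    lintegral_indicator_const (meas_ball0 _), one_mul,
    lintegral_finset_sum _ (fun j _ => measurable_const.indicator (meas_sphere _)),
    mu_ball0 hμ (by omega : -(m:ℤ) ≤ 0)]
  have hterm : ∀ j ∈ Finset.range m,
      ∫⁻ w, Set.indicator {v : F | ‖v‖ = (ℓ:ℝ)^(-(j:ℤ))}
        (fun _ => (ℓ:ENNReal)^((j:ℤ)-(m:ℤ))) w ∂μ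
      = ENNReal.ofReal (((ℓ:ℝ)⁻¹)^m * (1 - (ℓ:ℝ)⁻¹)) := by
    intro j hj
    rw [lintegral_indicator_const (meas_sphere _), mu_sphere hℓ hdisc hμ j, epow hℓ,
      ← ENNReal.ofReal_mul (zpow_nonneg h0.le _)]
    congr 1
    have hjx : (ℓ:ℝ)^(j:ℤ) * ((ℓ:ℝ)⁻¹)^j = 1 := by
      rw [zpow_natCast, ← mul_pow, mul_inv_cancel₀ (hlne hℓ), one_pow]
    rw [sub_eq_add_neg, zpow_add₀ (hlne hℓ), xpow hℓ]
    linear_combination (((ℓ:ℝ)⁻¹)^m * (1 - (ℓ:ℝ)⁻¹)) * hjx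
  rw [Finset.sum_congr rfl hterm, Finset.sum_const, Finset.card_range, nsmul_eq_mul,
    epow hℓ, xpow hℓ,
    show ((m:ENNReal)) = ENNReal.ofReal (m:ℝ) by rw [ENNReal.ofReal_natCast],
    ← ENNReal.ofReal_mul (Nat.cast_nonneg m),
    ← ENNReal.ofReal_add (by positivity) (mul_nonneg (Nat.cast_nonneg m)
      (mul_nonneg (by positivity) (hxc hℓ)))]
  congr 1
  ring

include hℓ hdisc hμ in
lemma LHS_small {a : F} {r : ℕ} {k : ℤ} (ha : ‖a‖ = (ℓ:ℝ)^(-(r:ℤ))) (hk : k < -(r:ℤ)) :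
    ∫⁻ w, μ {y : F | ‖w * y - a‖ ≤ (ℓ:ℝ)^k} ∂μ
      = ENNReal.ofReal ((1 - (ℓ:ℝ)⁻¹) * ((r:ℝ)+1) * (ℓ:ℝ)^k) := by
  have h1 := hl1 hℓ
  have h0 := hl0 hℓ
  have key : ∀ w : F, ‖w‖ ≤ 1 → μ {y : F | ‖w * y - a‖ ≤ (ℓ:ℝ)^k}
      = ∑ j ∈ Finset.range (r+1), Set.indicator {v : F | ‖v‖ = (ℓ:ℝ)^(-(j:ℤ))}
          (fun _ => (ℓ:ENNReal)^(k+(j:ℤ))) w := by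
    intro w hw
    by_cases hw0 : w = 0
    · subst hw0
      have he : {y : F | ‖(0:F) * y - a‖ ≤ (ℓ:ℝ)^k} = ∅ := by
        ext y
        simp only [Set.mem_setOf_eq, zero_mul, zero_sub, norm_neg, ha, Set.mem_empty_iff_false,
          iff_false, not_le]
        exact (zpow_lt_zpow_iff_right₀ h1).2 hk
      rw [he, measure_empty]
      symm
      apply Finset.sum_eq_zero
      intro j hj
      apply Set.indicator_of_notMem
      simp only [Set.mem_setOf_eq, norm_zero]
      exact fun heq => absurd heq.symm (ne_of_gt (zpow_pos h0 _))
    · obtain ⟨t, ht⟩ := hdisc w hw0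
      have ht0 : t ≤ 0 := by
        have h2 : (ℓ:ℝ)^t ≤ (ℓ:ℝ)^(0:ℤ) := by rw [zpow_zero, ← ht]; exact hw
        exact (zpow_le_zpow_iff_right₀ h1).1 h2
      have hfib : {y : F | ‖w * y - a‖ ≤ (ℓ:ℝ)^k}
          = {y : F | ‖y - a/w‖ ≤ (ℓ:ℝ)^(k-t)} := by
        ext y
        have hwy : w * y - a = w * (y - a/w) := by field_simp
        simp only [Set.mem_setOf_eq, hwy, norm_mul, ht]
        rw [zpow_sub₀ (hlne hℓ), le_div_iff₀' (zpow_pos h0 t)]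
      have hnaw : ‖a / w‖ = (ℓ:ℝ)^(-(r:ℤ) - t) := by
        rw [norm_div, ha, ht, ← zpow_sub₀ (hlne hℓ)]
      by_cases hcase : -(r:ℤ) ≤ t
      · rw [hfib, mu_ball hμ (k := k - t) (by omega)
          (by rw [hnaw]; calc (ℓ:ℝ)^(-(r:ℤ)-t) ≤ (ℓ:ℝ)^(0:ℤ) :=
                (zpow_le_zpow_iff_right₀ h1).2 (by omega)
              _ = 1 := zpow_zero _)]
        have hj0 : ((-t).toNat : ℤ) = -t := Int.toNat_of_nonneg (by omega)
        rw [Finset.sum_eq_single_of_mem (-t).toNat (Finset.mem_range.2 (by omega))]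
        · rw [Set.indicator_of_mem (by simp only [Set.mem_setOf_eq]; rw [ht]; congr 1; omega)]
          congr 1
          omega
        · intro j hjr hne
          apply Set.indicator_of_notMem
          simp only [Set.mem_setOf_eq]
          rw [ht]
          intro he
          have := zpow_inj' hℓ he
          omega
      · push_neg at hcase
        rw [hfib, ball_set_eq, ← ball_set_eq (a/w) ((ℓ:ℝ)^(k-t)),
          mu_ball_far hℓ hμ (c := a/w) (k := k - t)
            (by rw [hnaw]; calc (1:ℝ) = (ℓ:ℝ)^(0:ℤ) := (zpow_zero _).symm
                _ < _ := (zpow_lt_zpow_iff_right₀ h1).2 (by omega))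
            (by rw [hnaw]; exact (zpow_lt_zpow_iff_right₀ h1).2 (by omega))]
        symm
        apply Finset.sum_eq_zero
        intro j hj
        apply Set.indicator_of_notMem
        simp only [Set.mem_setOf_eq]
        rw [ht]
        intro he
        have h2 := zpow_inj' hℓ he
        have h3 := Finset.mem_range.1 hj
        omega
  rw [lintegral_congr_ae (by filter_upwards [ae_OF hμ] with w hw using key w hw),
    lintegral_finset_sum _ (fun j _ => measurable_const.indicator (meas_sphere _))]
  have hterm : ∀ j ∈ Finset.range (r+1),
      ∫⁻ w, Set.indicator {v : F | ‖v‖ = (ℓ:ℝ)^(-(j:ℤ))}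
        (fun _ => (ℓ:ENNReal)^(k+(j:ℤ))) w ∂μ
      = ENNReal.ofReal ((1 - (ℓ:ℝ)⁻¹) * (ℓ:ℝ)^k) := by
    intro j hj
    rw [lintegral_indicator_const (meas_sphere _), mu_sphere hℓ hdisc hμ j, epow hℓ,
      ← ENNReal.ofReal_mul (zpow_nonneg h0.le _)]
    congr 1
    have hjx : (ℓ:ℝ)^(j:ℤ) * ((ℓ:ℝ)⁻¹)^j = 1 := by
      rw [zpow_natCast, ← mul_pow, mul_inv_cancel₀ (hlne hℓ), one_pow]
    rw [zpow_add₀ (hlne hℓ)]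
    linear_combination ((1 - (ℓ:ℝ)⁻¹) * (ℓ:ℝ)^k) * hjx
  rw [Finset.sum_congr rfl hterm, Finset.sum_const, Finset.card_range, nsmul_eq_mul,
    show (((r+1 : ℕ)):ENNReal) = ENNReal.ofReal ((r:ℝ)+1) by
      rw [← ENNReal.ofReal_natCast]; congr 1; push_cast; ring,
    ← ENNReal.ofReal_mul (by positivity)]
  congr 1
  ring

end LHS

section RHS
variable {ℓ : ℕ} (hℓ : 2 ≤ ℓ)
variable {F : Type*} [NormedField F] [IsUltrametricDist F] [MeasurableSpace F] [BorelSpace F]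
variable {ν : Measure F}
variable (hdisc : ∀ x : F, x ≠ 0 → ∃ k : ℤ, ‖x‖ = (ℓ : ℝ) ^ k)
variable (hν : ∀ (k : ℤ) (a : F), ν {x : F | ‖x - a‖ ≤ (ℓ : ℝ) ^ k} = (ℓ : ENNReal) ^ k)

include hℓ in
lemma inner_sphere (r : ℕ) {z : F} (hz : ‖z‖ = (ℓ:ℝ)^(-(r:ℤ))) :
    ENNReal.ofReal (((ℓ:ℝ)-1)/ℓ * (-Real.logb ℓ ‖z‖ + 1))
      = ENNReal.ofReal ((1 - (ℓ:ℝ)⁻¹) * ((r:ℝ)+1)) := by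
  rw [hz, mylogb hℓ, density_const hℓ]
  congr 1
  push_cast
  ring

include hℓ hdisc hν in
lemma RHS_tail (m : ℕ) :
    ∫⁻ z in {z : F | ‖z‖ ≤ (ℓ:ℝ)^(-(m:ℤ)) ∧ z ≠ 0},
        ENNReal.ofReal (((ℓ:ℝ)-1)/ℓ * (-Real.logb ℓ ‖z‖ + 1)) ∂ν
      = ENNReal.ofReal (((ℓ:ℝ)⁻¹)^m * (1 + m * (1 - (ℓ:ℝ)⁻¹))) := by
  have h1 := hl1 hℓ
  have h0 := hl0 hℓ
  have hU : {z : F | ‖z‖ ≤ (ℓ:ℝ)^(-(m:ℤ)) ∧ z ≠ 0}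
      = ⋃ i : ℕ, {z : F | ‖z‖ = (ℓ:ℝ)^(-((m+i:ℕ):ℤ))} := by
    ext z
    simp only [Set.mem_setOf_eq, Set.mem_iUnion]
    constructor
    · rintro ⟨hle, hz0⟩
      obtain ⟨t, ht⟩ := hdisc z hz0
      have htm : t ≤ -(m:ℤ) := (zpow_le_zpow_iff_right₀ h1).1 (ht ▸ hle)
      refine ⟨(-t - m).toNat, ?_⟩
      rw [ht]
      congr 1
      push_cast
      omega
    · rintro ⟨i, hi⟩
      constructor
      · rw [hi]
        exact (zpow_le_zpow_iff_right₀ h1).2 (by push_cast; omega)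
      · intro hz
        rw [hz, norm_zero] at hi
        exact absurd hi.symm (ne_of_gt (zpow_pos h0 _))
  have hdisj : Pairwise (Function.onFun Disjoint
      (fun i : ℕ => {z : F | ‖z‖ = (ℓ:ℝ)^(-((m+i:ℕ):ℤ))})) := by
    intro i i' hne
    simp only [Function.onFun]
    rw [Set.disjoint_left]
    intro z hz hz'
    simp only [Set.mem_setOf_eq] at hz hz'
    have h2 := zpow_inj' hℓ (hz.symm.trans hz')
    apply hne
    omega
  rw [hU, lintegral_iUnion (fun i => meas_sphere _) hdisj]
  have hterm : ∀ i : ℕ,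
      ∫⁻ z in {z : F | ‖z‖ = (ℓ:ℝ)^(-((m+i:ℕ):ℤ))},
        ENNReal.ofReal (((ℓ:ℝ)-1)/ℓ * (-Real.logb ℓ ‖z‖ + 1)) ∂ν
      = ENNReal.ofReal (((1 - (ℓ:ℝ)⁻¹) * ((m:ℝ)+i+1)) * ((((ℓ:ℝ)⁻¹))^(m+i) * (1 - (ℓ:ℝ)⁻¹))) := by
    intro i
    rw [setLIntegral_congr_fun (meas_sphere _)
        (fun z hz => inner_sphere hℓ (m+i) hz),
      setLIntegral_const, nu_sphere hℓ hdisc hν (m+i),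
      ← ENNReal.ofReal_mul (mul_nonneg (hxc hℓ) (by positivity))]
    congr 1
    push_cast
    ring
  rw [tsum_congr hterm, ← ENNReal.ofReal_tsum_of_nonneg
      (fun i => mul_nonneg (mul_nonneg (hxc hℓ) (by positivity))
        (mul_nonneg (by positivity) (hxc hℓ)))
      (aux_summable _ (hx0 hℓ) (hx1 hℓ) m),
    aux_tsum _ (hx0 hℓ) (hx1 hℓ) m]

end RHS

end MulPush

/-- Let `F` be a non-archimedean local field of residue cardinality `ℓ`
(abstracted: an ultrametric normed field whose norm takes values in the powers of `ℓ`),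
`μ` the Haar probability measure on `O_F` and `ν` the Haar measure on `F` normalized by
`ν(O_F) = 1`. Then the pushforward of `μ ⊗ μ` under multiplication is supported on
`O_F` and is absolutely continuous with respect to `ν`, with density
`r(z) = ((ℓ-1)/ℓ)·(val(z)+1)` for `z ∈ O_F \ {0}` (where `val z = -log_ℓ ‖z‖`). -/
theorem mul_pushforward_density (ℓ : ℕ) (hℓ : 2 ≤ ℓ)
    {F : Type*} [NormedField F] [IsUltrametricDist F]
    [MeasurableSpace F] [BorelSpace F] [SecondCountableTopology F]
    (hdisc : ∀ x : F, x ≠ 0 → ∃ k : ℤ, ‖x‖ = (ℓ : ℝ) ^ k)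
    (μ ν : Measure F) [IsProbabilityMeasure μ]
    (hμ : ∀ (m : ℕ) (a : F), ‖a‖ ≤ 1 →
      μ {x : F | ‖x - a‖ ≤ (ℓ : ℝ) ^ (-(m : ℤ))} = (ℓ : ENNReal) ^ (-(m : ℤ)))
    (hν : ∀ (k : ℤ) (a : F), ν {x : F | ‖x - a‖ ≤ (ℓ : ℝ) ^ k} = (ℓ : ENNReal) ^ k) :
    (μ.prod μ).map (fun p : F × F => p.1 * p.2)
      = ν.withDensity (Set.indicator {z : F | ‖z‖ ≤ 1 ∧ z ≠ 0}
          (fun z => ENNReal.ofReal (((ℓ : ℝ) - 1) / ℓ * (-Real.logb ℓ ‖z‖ + 1)))) := by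
  classical
  have h1 := MulPush.hl1 hℓ
  have h0 := MulPush.hl0 hℓ
  have hDeq : {z : F | ‖z‖ ≤ 1 ∧ z ≠ 0} = {z : F | ‖z‖ ≤ 1} ∩ ({(0:F)}ᶜ) := by
    ext z
    simp [Set.mem_setOf_eq]
  have hDmeas : MeasurableSet {z : F | ‖z‖ ≤ 1 ∧ z ≠ 0} := by
    rw [hDeq]
    exact (MulPush.meas_ball0 1).inter (measurableSet_singleton (0:F)).compl
  haveI : IsProbabilityMeasure ((μ.prod μ).map (fun p : F × F => p.1 * p.2)) :=
    Measure.isProbabilityMeasure_map ((continuous_fst.mul continuous_snd).measurable).aemeasurable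
  -- total mass of RHS
  have hRHS_tot : ∀ (s : Set F), MeasurableSet s → {x : F | ‖x‖ ≤ 1} ⊆ s →
      ν.withDensity (Set.indicator {z : F | ‖z‖ ≤ 1 ∧ z ≠ 0}
        (fun z => ENNReal.ofReal (((ℓ : ℝ) - 1) / ℓ * (-Real.logb ℓ ‖z‖ + 1)))) s = 1 := by
    intro s hs hsub
    rw [withDensity_apply _ hs, lintegral_indicator hDmeas, Measure.restrict_restrict hDmeas]
    have hint : {z : F | ‖z‖ ≤ 1 ∧ z ≠ 0} ∩ s
        = {z : F | ‖z‖ ≤ (ℓ:ℝ)^(-((0:ℕ):ℤ)) ∧ z ≠ 0} := by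
      ext z
      simp only [Set.mem_inter_iff, Set.mem_setOf_eq, Nat.cast_zero, neg_zero, zpow_zero]
      exact ⟨fun h => h.1, fun h => ⟨h, hsub h.1⟩⟩
    rw [hint, MulPush.RHS_tail hℓ hdisc hν 0]
    norm_num
  refine ext_of_generate_finite _ (MulPush.generate_balls ℓ hℓ) (MulPush.piSystem_balls ℓ hℓ)
    ?_ ?_
  · rintro s ⟨a, k, rfl⟩
    rw [← MulPush.ball_set_eq]
    by_cases hc1 : ‖a‖ ≤ (ℓ:ℝ)^k
    · have hball : {x : F | ‖x - a‖ ≤ (ℓ:ℝ)^k} = {x : F | ‖x‖ ≤ (ℓ:ℝ)^k} := by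
        rw [MulPush.ball_set_eq, MulPush.ball0_set_eq,
          IsUltrametricDist.closedBall_eq_of_mem (x := a) (y := (0:F)) (by
            rw [Metric.mem_closedBall, dist_eq_norm, zero_sub, norm_neg]; exact hc1)]
      rw [hball]
      by_cases hc2 : 0 ≤ k
      · have hsub : {x : F | ‖x‖ ≤ 1} ⊆ {x : F | ‖x‖ ≤ (ℓ:ℝ)^k} := fun x hx => le_trans hx
          (by calc (1:ℝ) = (ℓ:ℝ)^(0:ℤ) := (zpow_zero _).symm
                _ ≤ _ := (zpow_le_zpow_iff_right₀ h1).2 hc2)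
        rw [MulPush.map_apply_mul (MulPush.meas_ball0 _), MulPush.LHS_one hμ hsub,
          hRHS_tot _ (MulPush.meas_ball0 _) hsub]
      · push_neg at hc2
        obtain ⟨m, rfl⟩ : ∃ m : ℕ, k = -(m:ℤ) := ⟨(-k).toNat, by omega⟩
        rw [MulPush.map_apply_mul (MulPush.meas_ball0 _)]
        simp only [Set.mem_setOf_eq]
        rw [MulPush.LHS_zero hℓ hdisc hμ m,
          withDensity_apply _ (MulPush.meas_ball0 _), lintegral_indicator hDmeas,
          Measure.restrict_restrict hDmeas]
        have hint : {z : F | ‖z‖ ≤ 1 ∧ z ≠ 0} ∩ {x : F | ‖x‖ ≤ (ℓ:ℝ)^(-(m:ℤ))}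
            = {z : F | ‖z‖ ≤ (ℓ:ℝ)^(-(m:ℤ)) ∧ z ≠ 0} := by
          ext z
          simp only [Set.mem_inter_iff, Set.mem_setOf_eq]
          constructor
          · rintro ⟨⟨_, hz0⟩, hzm⟩
            exact ⟨hzm, hz0⟩
          · rintro ⟨hzm, hz0⟩
            refine ⟨⟨le_trans hzm ?_, hz0⟩, hzm⟩
            calc (ℓ:ℝ)^(-(m:ℤ)) ≤ (ℓ:ℝ)^(0:ℤ) := (zpow_le_zpow_iff_right₀ h1).2 (by omega)
              _ = 1 := zpow_zero _
        rw [hint, MulPush.RHS_tail hℓ hdisc hν m]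
    · push_neg at hc1
      by_cases hc3 : ‖a‖ ≤ 1
      · have ha0 : a ≠ 0 := by
          rintro rfl
          rw [norm_zero] at hc1
          exact absurd hc1 (not_lt.2 (zpow_pos h0 _).le)
        obtain ⟨t, ht⟩ := hdisc a ha0
        have ht0 : t ≤ 0 := (zpow_le_zpow_iff_right₀ h1).1
          (by rw [zpow_zero, ← ht]; exact hc3)
        obtain ⟨r, hr⟩ : ∃ r : ℕ, t = -(r:ℤ) := ⟨(-t).toNat, by omega⟩
        have ha' : ‖a‖ = (ℓ:ℝ)^(-(r:ℤ)) := by rw [ht, hr]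
        have hkr : k < -(r:ℤ) := (zpow_lt_zpow_iff_right₀ h1).1 (by rw [← ha']; exact hc1)
        rw [MulPush.map_apply_mul (MulPush.meas_ball a _)]
        simp only [Set.mem_setOf_eq]
        rw [MulPush.LHS_small hℓ hdisc hμ ha' hkr,
          withDensity_apply _ (MulPush.meas_ball a _), lintegral_indicator hDmeas,
          Measure.restrict_restrict hDmeas]
        have hnormeq : ∀ z : F, ‖z - a‖ ≤ (ℓ:ℝ)^k → ‖z‖ = (ℓ:ℝ)^(-(r:ℤ)) := by
          intro z hz
          rw [← ha']
          exact MulPush.norm_eq_of_sub_lt (lt_of_le_of_lt hz (by rw [ha'] at hc1 ⊢; exact hc1))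
        have hsubD : {x : F | ‖x - a‖ ≤ (ℓ:ℝ)^k} ⊆ {z : F | ‖z‖ ≤ 1 ∧ z ≠ 0} := by
          intro z hz
          have hz' := hnormeq z hz
          refine ⟨by rw [hz', ← ha']; exact hc3, ?_⟩
          rintro rfl
          rw [norm_zero] at hz'
          exact absurd hz'.symm (ne_of_gt (zpow_pos h0 _))
        rw [Set.inter_eq_right.2 hsubD,
          setLIntegral_congr_fun (MulPush.meas_ball a _)
            (fun z hz => MulPush.inner_sphere hℓ r (hnormeq z hz)),
          setLIntegral_const, hν k a, MulPush.epow hℓ,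
          ← ENNReal.ofReal_mul (mul_nonneg (MulPush.hxc hℓ) (by positivity))]
      · push_neg at hc3
        have hfar : ∀ z ∈ {x : F | ‖x - a‖ ≤ (ℓ:ℝ)^k}, ¬ ‖z‖ ≤ 1 := by
          intro z hz
          have hz' : ‖z‖ = ‖a‖ := MulPush.norm_eq_of_sub_lt (lt_of_le_of_lt hz hc1)
          rw [hz']
          exact not_le.2 hc3
        rw [MulPush.map_apply_mul (MulPush.meas_ball a _), MulPush.LHS_empty hμ hfar,
          withDensity_apply _ (MulPush.meas_ball a _), lintegral_indicator hDmeas,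
          Measure.restrict_restrict hDmeas]
        have hint : {z : F | ‖z‖ ≤ 1 ∧ z ≠ 0} ∩ {x : F | ‖x - a‖ ≤ (ℓ:ℝ)^k} = ∅ := by
          ext z
          simp only [Set.mem_inter_iff, Set.mem_setOf_eq, Set.mem_empty_iff_false, iff_false,
            not_and]
          rintro ⟨hz1, _⟩ hz2
          exact hfar z hz2 hz1
        rw [hint, Measure.restrict_empty, lintegral_zero_measure]
  · rw [measure_univ, hRHS_tot Set.univ MeasurableSet.univ (Set.subset_univ _)]
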